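/- Let \nu > -1/2 and b > -1/2. For every j\ge 2 and every \eta=(\eta_1,\eta_2) with 1/2\le \eta_2\le 2 and \sqrt{2^{1-j}}\,\eta_2/|\eta_1| > 1, one has \int_{|\eta_1|/\eta_2}^{\sqrt{2^{1-j}}} t^{2b} (1 - \eta_1^2/(t^2\eta_2^2))^{2\nu} dt \le C (|\eta_1|/\eta_2)^{2b+1} (\eta_2/|\eta_1|)^{2b+1} 2^{-j(2b+1)/2} = C\, 2^{-j(2b+1)/2}, where C depends only on \nu and b. -/
import Mathlib


open MeasureTheory Real Set

lemma shift_integrable (r : ℝ) (hr : -1 < r) (a A : ℝ) :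
    IntegrableOn (fun t : ℝ => (t - a) ^ r) (Set.Ioc a A) := by
  have h : IntervalIntegrable (fun s : ℝ => s ^ r) volume (a - a) (A - a) :=
    intervalIntegral.intervalIntegrable_rpow' hr
  have h2 := h.comp_sub_right a
  simp only [sub_add_cancel] at h2
  exact h2.1

lemma shift_integral_le (r : ℝ) (hr : -1 < r) (a A : ℝ) (ha : 0 ≤ a) (haA : a ≤ A) :
    ∫ t in Set.Ioc a A, (t - a) ^ r ≤ A ^ (r + 1) / (r + 1) := by
  have hr1 : 0 < r + 1 := by linarith
  rw [← intervalIntegral.integral_of_le haA,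
    intervalIntegral.integral_comp_sub_right (fun s => s ^ r) a, sub_self,
    integral_rpow (Or.inl hr), Real.zero_rpow (ne_of_gt hr1), sub_zero]
  gcongr <;> linarith

lemma key_bound (ν b : ℝ) (hν : -(1/2:ℝ) < ν) (hb : -(1/2:ℝ) < b) (a A : ℝ)
    (ha : 0 < a) (haA : a < A) :
    ∫ t in a..A, t ^ (2*b) * (1 - a^2/t^2) ^ (2*ν)
      ≤ (1/(2*ν+1) + 1/(2*b+1)) * A ^ (2*b+1) := by
  have hq : -1 < 2*ν := by linarith
  have hp : -1 < 2*b := by linarith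
  have hq1 : 0 < 2*ν+1 := by linarith
  have hp1 : 0 < 2*b+1 := by linarith
  have hA : 0 < A := ha.trans haA
  have hApow : 0 < A ^ (2*b+1) := Real.rpow_pos_of_pos hA _
  rw [intervalIntegral.integral_of_le haA.le]
  have hfnn : 0 ≤ᵐ[volume.restrict (Set.Ioc a A)]
      fun t => t ^ (2*b) * (1 - a^2/t^2) ^ (2*ν) := by
    filter_upwards [ae_restrict_mem measurableSet_Ioc] with t ht
    have ht0 : 0 < t := ha.trans ht.1
    have h1 : 0 ≤ 1 - a^2/t^2 := by
      rw [sub_nonneg, div_le_one (by positivity)]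
      exact pow_le_pow_left₀ ha.le ht.1.le 2
    positivity
  -- general pointwise bound for ν < 0
  have hgen : ν < 0 → ∀ t ∈ Set.Ioc a A,
      t ^ (2*b) * (1 - a^2/t^2) ^ (2*ν) ≤ t ^ (2*b - 2*ν) * (t - a) ^ (2*ν) := by
    intro hνneg t ht
    have ht0 : 0 < t := ha.trans ht.1
    have hta : 0 < t - a := sub_pos.2 ht.1
    have e1 : 1 - a^2/t^2 = (t - a) * (t + a) / t^2 := by
      field_simp
      ring
    have hstep : ((t - a) * (t + a) / t^2) ^ (2*ν) ≤ ((t - a) / t) ^ (2*ν) := by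
      apply Real.rpow_le_rpow_of_nonpos (by positivity) ?_ (by linarith)
      rw [div_le_div_iff₀ (by positivity) (by positivity)]
      calc (t - a) * t^2 = ((t - a) * t) * t := by ring
        _ ≤ ((t - a) * (t + a)) * t := by nlinarith [mul_nonneg (mul_nonneg hta.le ht0.le) ha.le]
        _ = (t - a) * (t + a) * t := by ring
    have e2 : ((t - a) / t) ^ (2*ν) = (t - a) ^ (2*ν) / t ^ (2*ν) :=
      Real.div_rpow hta.le ht0.le (2*ν)
    have e3 : t ^ (2*b) / t ^ (2*ν) = t ^ (2*b - 2*ν) := by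
      rw [← Real.rpow_sub ht0]
    calc t ^ (2*b) * (1 - a^2/t^2) ^ (2*ν)
        = t ^ (2*b) * ((t - a) * (t + a) / t^2) ^ (2*ν) := by rw [e1]
      _ ≤ t ^ (2*b) * ((t - a) / t) ^ (2*ν) := by
          apply mul_le_mul_of_nonneg_left hstep (Real.rpow_nonneg ht0.le _)
      _ = t ^ (2*b) / t ^ (2*ν) * (t - a) ^ (2*ν) := by rw [e2]; ring
      _ = t ^ (2*b - 2*ν) * (t - a) ^ (2*ν) := by rw [e3]
  rcases le_or_gt 0 ν with hν0 | hν0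
  · -- case ν ≥ 0 : integrand ≤ t ^ (2b)
    have hgi : IntegrableOn (fun t : ℝ => t ^ (2*b)) (Set.Ioc a A) :=
      (intervalIntegral.intervalIntegrable_rpow' hp (a := a) (b := A)).1
    have hle : (fun t => t ^ (2*b) * (1 - a^2/t^2) ^ (2*ν))
        ≤ᵐ[volume.restrict (Set.Ioc a A)] fun t => t ^ (2*b) := by
      filter_upwards [ae_restrict_mem measurableSet_Ioc] with t ht
      have ht0 : 0 < t := ha.trans ht.1
      have h1 : 0 ≤ 1 - a^2/t^2 := by
        rw [sub_nonneg, div_le_one (by positivity)]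
        exact pow_le_pow_left₀ ha.le ht.1.le 2
      have h2 : 1 - a^2/t^2 ≤ 1 := by
        have : 0 ≤ a^2/t^2 := by positivity
        linarith
      calc t ^ (2*b) * (1 - a^2/t^2) ^ (2*ν)
          ≤ t ^ (2*b) * 1 := by
            apply mul_le_mul_of_nonneg_left ?_ (Real.rpow_nonneg ht0.le _)
            exact Real.rpow_le_one h1 h2 (by linarith)
        _ = t ^ (2*b) := mul_one _
    calc ∫ t in Set.Ioc a A, t ^ (2*b) * (1 - a^2/t^2) ^ (2*ν)
        ≤ ∫ t in Set.Ioc a A, t ^ (2*b) := integral_mono_of_nonneg hfnn hgi hle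
      _ = (A ^ (2*b+1) - a ^ (2*b+1)) / (2*b+1) := by
          rw [← intervalIntegral.integral_of_le haA.le, integral_rpow (Or.inl hp)]
      _ ≤ A ^ (2*b+1) / (2*b+1) := by
          have h0 : 0 ≤ a ^ (2*b+1) := Real.rpow_nonneg ha.le _
          gcongr <;> linarith
      _ = 1/(2*b+1) * A ^ (2*b+1) := by ring
      _ ≤ (1/(2*ν+1) + 1/(2*b+1)) * A ^ (2*b+1) := by
          have : (0:ℝ) < 1/(2*ν+1) := by positivity
          nlinarith
  · rcases le_or_gt (2*ν) (2*b) with hbν | hbν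
    · -- case ν < 0, 2ν ≤ 2b : integrand ≤ A^(2b-2ν) (t-a)^(2ν)
      have hgi : IntegrableOn (fun t : ℝ => A ^ (2*b-2*ν) * (t - a) ^ (2*ν)) (Set.Ioc a A) :=
        (shift_integrable (2*ν) hq a A).const_mul _
      have hle : (fun t => t ^ (2*b) * (1 - a^2/t^2) ^ (2*ν))
          ≤ᵐ[volume.restrict (Set.Ioc a A)]
          fun t => A ^ (2*b-2*ν) * (t - a) ^ (2*ν) := by
        filter_upwards [ae_restrict_mem measurableSet_Ioc] with t ht
        have ht0 : 0 < t := ha.trans ht.1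
        have hta : 0 < t - a := sub_pos.2 ht.1
        refine (hgen hν0 t ht).trans ?_
        apply mul_le_mul_of_nonneg_right ?_ (Real.rpow_nonneg hta.le _)
        exact Real.rpow_le_rpow ht0.le ht.2 (by linarith)
      calc ∫ t in Set.Ioc a A, t ^ (2*b) * (1 - a^2/t^2) ^ (2*ν)
          ≤ ∫ t in Set.Ioc a A, A ^ (2*b-2*ν) * (t - a) ^ (2*ν) :=
            integral_mono_of_nonneg hfnn hgi hle
        _ = A ^ (2*b-2*ν) * ∫ t in Set.Ioc a A, (t - a) ^ (2*ν) := by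
            rw [integral_const_mul]
        _ ≤ A ^ (2*b-2*ν) * (A ^ (2*ν+1) / (2*ν+1)) := by
            apply mul_le_mul_of_nonneg_left
              (shift_integral_le (2*ν) hq a A ha.le haA.le)
              (Real.rpow_nonneg hA.le _)
        _ = 1/(2*ν+1) * (A ^ (2*b-2*ν) * A ^ (2*ν+1)) := by ring
        _ = 1/(2*ν+1) * A ^ (2*b+1) := by
            rw [← Real.rpow_add hA]
            ring_nf
        _ ≤ (1/(2*ν+1) + 1/(2*b+1)) * A ^ (2*b+1) := by
            have : (0:ℝ) < 1/(2*b+1) := by positivity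
            nlinarith
    · -- case ν < 0, 2b < 2ν : integrand ≤ (t-a)^(2b)
      have hgi : IntegrableOn (fun t : ℝ => (t - a) ^ (2*b)) (Set.Ioc a A) :=
        shift_integrable (2*b) hp a A
      have hle : (fun t => t ^ (2*b) * (1 - a^2/t^2) ^ (2*ν))
          ≤ᵐ[volume.restrict (Set.Ioc a A)] fun t => (t - a) ^ (2*b) := by
        filter_upwards [ae_restrict_mem measurableSet_Ioc] with t ht
        have ht0 : 0 < t := ha.trans ht.1
        have hta : 0 < t - a := sub_pos.2 ht.1
        refine (hgen hν0 t ht).trans ?_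
        calc t ^ (2*b - 2*ν) * (t - a) ^ (2*ν)
            ≤ (t - a) ^ (2*b - 2*ν) * (t - a) ^ (2*ν) := by
              apply mul_le_mul_of_nonneg_right ?_ (Real.rpow_nonneg hta.le _)
              exact Real.rpow_le_rpow_of_nonpos hta (by linarith) (by linarith)
          _ = (t - a) ^ (2*b) := by
              rw [← Real.rpow_add hta]
              ring_nf
      calc ∫ t in Set.Ioc a A, t ^ (2*b) * (1 - a^2/t^2) ^ (2*ν)
          ≤ ∫ t in Set.Ioc a A, (t - a) ^ (2*b) :=
            integral_mono_of_nonneg hfnn hgi hle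
        _ ≤ A ^ (2*b+1) / (2*b+1) := shift_integral_le (2*b) hp a A ha.le haA.le
        _ = 1/(2*b+1) * A ^ (2*b+1) := by ring
        _ ≤ (1/(2*ν+1) + 1/(2*b+1)) * A ^ (2*b+1) := by
            have : (0:ℝ) < 1/(2*ν+1) := by positivity
            nlinarith

/-- the key Fourier-side bound in the `L²` estimate for `H_b^{ν,j}`. -/
theorem fourier_side_bound (ν b : ℝ) (hν : -(1/2 : ℝ) < ν) (hb : -(1/2 : ℝ) < b) :
    ∃ C > 0, ∀ (j : ℕ), 2 ≤ j → ∀ η₁ η₂ : ℝ, 1/2 ≤ η₂ → η₂ ≤ 2 →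
      1 < Real.sqrt ((2:ℝ) ^ (1 - (j:ℝ))) * η₂ / |η₁| →
      ∫ t in (|η₁| / η₂)..(Real.sqrt ((2:ℝ) ^ (1 - (j:ℝ)))),
          t ^ (2 * b) * (1 - η₁ ^ 2 / (t ^ 2 * η₂ ^ 2)) ^ (2 * ν)
        ≤ C * (2:ℝ) ^ (-(j:ℝ) * (2 * b + 1) / 2) := by
  have hq1 : 0 < 2*ν+1 := by linarith
  have hp1 : 0 < 2*b+1 := by linarith
  refine ⟨(1/(2*ν+1) + 1/(2*b+1)) * (2:ℝ) ^ ((2*b+1)/2), by positivity, ?_⟩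
  intro j hj η₁ η₂ hη₂l hη₂r hbig
  set A : ℝ := Real.sqrt ((2:ℝ) ^ (1 - (j:ℝ))) with hAdef
  have hη₂ : 0 < η₂ := by linarith
  have hx2 : (0:ℝ) < (2:ℝ) ^ (1 - (j:ℝ)) := Real.rpow_pos_of_pos two_pos _
  have hApos : 0 < A := Real.sqrt_pos.2 hx2
  have hη₁ : η₁ ≠ 0 := by
    intro h
    rw [h, abs_zero, div_zero] at hbig
    linarith
  set a : ℝ := |η₁| / η₂ with hadef
  have ha : 0 < a := div_pos (abs_pos.2 hη₁) hη₂
  have haA : a < A := by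
    have h1 : 1 < A / a := by
      rw [hadef, div_div_eq_mul_div]
      exact hbig
    rw [lt_div_iff₀ ha] at h1
    linarith
  have hEq : ∀ t : ℝ, η₁ ^ 2 / (t ^ 2 * η₂ ^ 2) = a ^ 2 / t ^ 2 := by
    intro t
    have h2 : a ^ 2 = η₁ ^ 2 / η₂ ^ 2 := by rw [hadef, div_pow, sq_abs]
    rw [h2]
    ring
  have key := key_bound ν b hν hb a A ha haA
  have hAexp : A ^ (2*b+1) = (2:ℝ) ^ ((2*b+1)/2) * (2:ℝ) ^ (-(j:ℝ) * (2 * b + 1) / 2) := by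
    rw [hAdef, Real.sqrt_eq_rpow, ← Real.rpow_mul hx2.le,
      ← Real.rpow_mul (by norm_num : (0:ℝ) ≤ 2), ← Real.rpow_add two_pos]
    congr 1
    ring
  calc ∫ t in a..A, t ^ (2 * b) * (1 - η₁ ^ 2 / (t ^ 2 * η₂ ^ 2)) ^ (2 * ν)
      = ∫ t in a..A, t ^ (2 * b) * (1 - a ^ 2 / t ^ 2) ^ (2 * ν) := by
        simp only [hEq]
    _ ≤ (1/(2*ν+1) + 1/(2*b+1)) * A ^ (2*b+1) := key
    _ = (1/(2*ν+1) + 1/(2*b+1)) * (2:ℝ) ^ ((2*b+1)/2) * (2:ℝ) ^ (-(j:ℝ) * (2 * b + 1) / 2) := by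
        rw [hAexp]; ring
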